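/- For every finite simple graph G with m ≥ 1 edges and every nonempty proper subset S of its vertex set V, the number of edges leaving S satisfies e_out(S) ≥ vol(S)·(1 − vol(S)/(2m)) − m·Q(G), where Q(G) is the maximum modularity over all partitions of V. -/
import Mathlib

open Finset
open scoped Classical

noncomputable section

set_option linter.unusedSectionVars false

namespace HCSPaper

variable {V : Type*} [Fintype V] [DecidableEq V]

/-- The number of edges of a finite simple graph `G`. -/
def edgeCount (G : SimpleGraph V) : ℕ := G.edgeSet.ncard

/-- The degree `d(v)` of a vertex. -/
def deg (G : SimpleGraph V) (v : V) : ℕ := (G.neighborSet v).ncard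

/-- The modularity `Q(P)` of a partition `P` of the vertex set of `G`:
`Q(P) = (1/(2m)) Σ_{u,v} [A_{u,v} − d(u)d(v)/(2m)] δ_P(u,v)`, the sum over ordered pairs. -/
def Qmod (G : SimpleGraph V) (P : Finpartition (Finset.univ : Finset V)) : ℝ :=
  (1 / (2 * (edgeCount G : ℝ))) *
    ∑ u : V, ∑ v : V,
      ((if G.Adj u v then (1 : ℝ) else 0) -
          (deg G u : ℝ) * (deg G v : ℝ) / (2 * (edgeCount G : ℝ))) *
        (if ∃ t ∈ P.parts, u ∈ t ∧ v ∈ t then (1 : ℝ) else 0)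

/-- The volume of a set of vertices: `vol(S) = Σ_{v∈S} d(v)`. -/
def vol (G : SimpleGraph V) (S : Finset V) : ℕ := ∑ v ∈ S, deg G v

/-- The number of edges of `G` with exactly one endpoint in `S`, counted as the set of
ordered pairs `(u,v)` with `u ∈ S`, `v ∉ S` and `u ~ v` (each such edge contributes
exactly one such ordered pair). -/
def eOut (G : SimpleGraph V) (S : Finset V) : ℕ :=
  Set.ncard {p : V × V | p.1 ∈ S ∧ p.2 ∉ S ∧ G.Adj p.1 p.2}

/-- The modularity `Q(G)` of `G`: the maximum of `Q(P)` over all partitions of the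
vertex set. -/
def Qmax (G : SimpleGraph V) : ℝ :=
  sSup (Set.range fun P : Finpartition (Finset.univ : Finset V) => Qmod G P)

lemma deg_eq_degree (G : SimpleGraph V) (u : V) : deg G u = G.degree u := by
  rw [deg, Set.ncard_eq_toFinset_card', SimpleGraph.degree]; congr 1

lemma deg_eq_sum (G : SimpleGraph V) (u : V) :
    (deg G u : ℝ) = ∑ v : V, (if G.Adj u v then (1 : ℝ) else 0) := by
  rw [Finset.sum_boole, deg, Set.ncard_eq_toFinset_card']
  congr 2
  ext v
  simp

lemma sum_deg (G : SimpleGraph V) : ∑ v : V, (deg G v : ℝ) = 2 * (edgeCount G : ℝ) := by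
  have h : edgeCount G = G.edgeFinset.card := by
    rw [edgeCount, Set.ncard_eq_toFinset_card', SimpleGraph.edgeFinset]
  have := G.sum_degrees_eq_twice_card_edges
  simp only [deg_eq_degree, h]
  exact_mod_cast congrArg (Nat.cast : ℕ → ℝ) this

lemma eOut_eq_sum (G : SimpleGraph V) (S : Finset V) :
    (eOut G S : ℝ) = ∑ u ∈ S, ∑ v ∈ Sᶜ, (if G.Adj u v then (1 : ℝ) else 0) := by
  have hset : {p : V × V | p.1 ∈ S ∧ p.2 ∉ S ∧ G.Adj p.1 p.2} =
      ↑((S ×ˢ Sᶜ).filter fun p => G.Adj p.1 p.2) := by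
    ext p
    simp [and_assoc]
  rw [eOut, hset, Set.ncard_coe_finset]
  rw [Finset.card_filter, Finset.sum_product]
  push_cast
  rfl

/-- The two-part partition `{S, Sᶜ}`. -/
def twoPart (S : Finset V) (hS : S.Nonempty) (hSproper : S ≠ Finset.univ) :
    Finpartition (Finset.univ : Finset V) where
  parts := {S, Sᶜ}
  supIndep := by
    have hne : S ≠ Sᶜ := by
      obtain ⟨x, hx⟩ := hS
      intro h
      have := hx
      rw [h, Finset.mem_compl] at this
      exact this hx
    rw [Finset.supIndep_pair hne]
    exact disjoint_compl_right
  sup_parts := by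
    simp [Finset.sup_insert, Finset.sup_singleton, Finset.sup_eq_union, Finset.union_compl]
  bot_notMem := by
    have h1 : S ≠ ⊥ := by simpa [Finset.bot_eq_empty, ← Finset.nonempty_iff_ne_empty] using hS
    have h2 : Sᶜ ≠ ⊥ := by
      rw [Finset.bot_eq_empty, Ne, Finset.compl_eq_empty_iff]
      exact hSproper
    simp only [Finset.mem_insert, Finset.mem_singleton, Finset.bot_eq_empty] at *
    push_neg
    exact ⟨fun h => h1 h.symm, fun h => h2 h.symm⟩

lemma Qmod_le_one (G : SimpleGraph V) (hm : 1 ≤ edgeCount G)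
    (P : Finpartition (Finset.univ : Finset V)) : Qmod G P ≤ 1 := by
  have hm' : (1 : ℝ) ≤ (edgeCount G : ℝ) := by exact_mod_cast hm
  have hmpos : (0 : ℝ) < 2 * (edgeCount G : ℝ) := by linarith
  have hsum : ∑ u : V, ∑ v : V,
      ((if G.Adj u v then (1 : ℝ) else 0) -
          (deg G u : ℝ) * (deg G v : ℝ) / (2 * (edgeCount G : ℝ))) *
        (if ∃ t ∈ P.parts, u ∈ t ∧ v ∈ t then (1 : ℝ) else 0)
      ≤ 2 * (edgeCount G : ℝ) := by
    calc _ ≤ ∑ u : V, ∑ v : V, (if G.Adj u v then (1 : ℝ) else 0) := by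
            apply Finset.sum_le_sum; intro u _
            apply Finset.sum_le_sum; intro v _
            have hdd : (0:ℝ) ≤ (deg G u : ℝ) * (deg G v : ℝ) / (2 * (edgeCount G : ℝ)) := by
              positivity
            split_ifs with h1 h2 h2 <;> simp <;> nlinarith
      _ = ∑ u : V, (deg G u : ℝ) := Finset.sum_congr rfl fun u _ => (deg_eq_sum G u).symm
      _ = 2 * (edgeCount G : ℝ) := sum_deg G
  rw [Qmod, div_mul_eq_mul_div, one_mul, div_le_one hmpos]
  exact hsum

lemma Qmod_le_Qmax (G : SimpleGraph V) (hm : 1 ≤ edgeCount G)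
    (P : Finpartition (Finset.univ : Finset V)) : Qmod G P ≤ Qmax G :=
  le_csSup ⟨1, Set.forall_mem_range.2 fun P' => Qmod_le_one G hm P'⟩ ⟨P, rfl⟩

lemma vol_cast (G : SimpleGraph V) (T : Finset V) :
    (vol G T : ℝ) = ∑ v ∈ T, (deg G v : ℝ) := by
  rw [vol]; push_cast; rfl

lemma vol_compl (G : SimpleGraph V) (S : Finset V) :
    (vol G Sᶜ : ℝ) = 2 * (edgeCount G : ℝ) - (vol G S : ℝ) := by
  have h := Finset.sum_add_sum_compl S (fun v => (deg G v : ℝ))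
  rw [sum_deg] at h
  rw [vol_cast, vol_cast]
  linarith

lemma inner_split (G : SimpleGraph V) (T : Finset V) :
    ∑ u ∈ T, ∑ v ∈ T, (if G.Adj u v then (1 : ℝ) else 0) =
      (vol G T : ℝ) - ∑ u ∈ T, ∑ v ∈ Tᶜ, (if G.Adj u v then (1 : ℝ) else 0) := by
  rw [vol_cast, eq_sub_iff_add_eq, ← Finset.sum_add_distrib]
  refine Finset.sum_congr rfl fun u _ => ?_
  rw [Finset.sum_add_sum_compl T (fun v => if G.Adj u v then (1:ℝ) else 0)]
  exact (deg_eq_sum G u).symm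

lemma sym_sum (G : SimpleGraph V) (S : Finset V) :
    ∑ u ∈ Sᶜ, ∑ v ∈ S, (if G.Adj u v then (1 : ℝ) else 0) =
      ∑ u ∈ S, ∑ v ∈ Sᶜ, (if G.Adj u v then (1 : ℝ) else 0) := by
  rw [Finset.sum_comm]
  exact Finset.sum_congr rfl fun u _ => Finset.sum_congr rfl fun v _ => by
    rw [SimpleGraph.adj_comm]

lemma dd_sum (G : SimpleGraph V) (T : Finset V) :
    ∑ u ∈ T, ∑ v ∈ T, (deg G u : ℝ) * (deg G v : ℝ) / (2 * (edgeCount G : ℝ)) =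
      (vol G T : ℝ) * (vol G T : ℝ) / (2 * (edgeCount G : ℝ)) := by
  rw [vol_cast, Finset.sum_mul_sum]
  rw [Finset.sum_div]
  refine Finset.sum_congr rfl fun u _ => ?_
  rw [Finset.sum_div]

lemma Qmod_twoPart (G : SimpleGraph V) (hm : 1 ≤ edgeCount G)
    (S : Finset V) (hS : S.Nonempty) (hSproper : S ≠ Finset.univ) :
    (edgeCount G : ℝ) * Qmod G (twoPart S hS hSproper) =
      (vol G S : ℝ) * (1 - (vol G S : ℝ) / (2 * (edgeCount G : ℝ))) - (eOut G S : ℝ) := by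
  have hm' : (1 : ℝ) ≤ (edgeCount G : ℝ) := by exact_mod_cast hm
  have hmne : (edgeCount G : ℝ) ≠ 0 := by linarith
  set m : ℝ := (edgeCount G : ℝ) with hmdef
  have hdelta : ∀ u v : V, (∃ t ∈ (twoPart S hS hSproper).parts, u ∈ t ∧ v ∈ t) ↔
      ((u ∈ S ∧ v ∈ S) ∨ (u ∈ Sᶜ ∧ v ∈ Sᶜ)) := by
    intro u v
    simp [twoPart]
  set g : V → V → ℝ := fun u v =>
    (if G.Adj u v then (1 : ℝ) else 0) - (deg G u : ℝ) * (deg G v : ℝ) / (2 * m) with hg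
  have hsplit : ∑ u : V, ∑ v : V,
      g u v * (if ∃ t ∈ (twoPart S hS hSproper).parts, u ∈ t ∧ v ∈ t then (1 : ℝ) else 0)
      = (∑ u ∈ S, ∑ v ∈ S, g u v) + ∑ u ∈ Sᶜ, ∑ v ∈ Sᶜ, g u v := by
    rw [← Finset.sum_add_sum_compl S]
    congr 1
    · refine Finset.sum_congr rfl fun u hu => ?_
      have : ∀ v : V, g u v * (if ∃ t ∈ (twoPart S hS hSproper).parts, u ∈ t ∧ v ∈ t
          then (1 : ℝ) else 0) = if v ∈ S then g u v else 0 := by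
        intro v
        simp only [hdelta]
        have hu' : u ∉ Sᶜ := by simp [hu]
        by_cases hv : v ∈ S <;> simp [hu, hu', hv]
      rw [Finset.sum_congr rfl fun v _ => this v, Finset.sum_ite_mem, Finset.univ_inter]
    · refine Finset.sum_congr rfl fun u hu => ?_
      have hu' : u ∉ S := by simpa using hu
      have : ∀ v : V, g u v * (if ∃ t ∈ (twoPart S hS hSproper).parts, u ∈ t ∧ v ∈ t
          then (1 : ℝ) else 0) = if v ∈ Sᶜ then g u v else 0 := by
        intro v
        simp only [hdelta]
        by_cases hv : v ∈ Sᶜ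
        · have : v ∉ S := by simpa using hv
          simp [hu, hu', hv, this]
        · have : v ∈ S := by simpa using hv
          simp [hu, hu', hv, this]
      rw [Finset.sum_congr rfl fun v _ => this v, Finset.sum_ite_mem, Finset.univ_inter]
  have hpart : ∀ T : Finset V, ∑ u ∈ T, ∑ v ∈ T, g u v =
      ((vol G T : ℝ) - ∑ u ∈ T, ∑ v ∈ Tᶜ, (if G.Adj u v then (1 : ℝ) else 0))
        - (vol G T : ℝ) * (vol G T : ℝ) / (2 * m) := by
    intro T
    simp only [hg, Finset.sum_sub_distrib]
    rw [inner_split, dd_sum]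
  have hS2 := hpart S
  have hSc := hpart Sᶜ
  rw [compl_compl, sym_sum, ← eOut_eq_sum] at hSc
  rw [← eOut_eq_sum] at hS2
  rw [Qmod, ← hmdef]
  show m * (1 / (2 * m) * ∑ u : V, ∑ v : V,
      g u v * (if ∃ t ∈ (twoPart S hS hSproper).parts, u ∈ t ∧ v ∈ t then (1 : ℝ) else 0)) = _
  rw [hsplit, hS2, hSc, vol_compl, ← hmdef]
  field_simp
  ring

theorem eOut_ge_vol_sub_modularity (G : SimpleGraph V) (hm : 1 ≤ edgeCount G)
    (S : Finset V) (hS : S.Nonempty) (hSproper : S ≠ Finset.univ) :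
    (vol G S : ℝ) * (1 - (vol G S : ℝ) / (2 * (edgeCount G : ℝ))) -
        (edgeCount G : ℝ) * Qmax G ≤ (eOut G S : ℝ) := by
  have hm' : (0 : ℝ) < (edgeCount G : ℝ) := by
    have : (1 : ℝ) ≤ (edgeCount G : ℝ) := by exact_mod_cast hm
    linarith
  have h1 := Qmod_le_Qmax G hm (twoPart S hS hSproper)
  have h2 := Qmod_twoPart G hm S hS hSproper
  nlinarith [mul_le_mul_of_nonneg_left h1 hm'.le]

end HCSPaper
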